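/- Let I ⊆ ℝ be an open interval, let C, Λ, R⋆, D ∈ ℝ, and let a : I → ℝ be a twice differentiable positive function satisfying both 0 = 2·(d/dt)(a'(t)·√(a(t))) + (5/6)C·a(t)^{7/2} − Λ·a(t)^{3/2} + (R⋆/6)·a(t)^{−1/2} and (a'(t)/a(t))² = −(C/6)a(t)² + Λ/3 − R⋆/(6a(t)²) + D/a(t)³ on I. Then for all t ∈ I, a''(t)/a(t) = Λ/3 − (1/3)C·a(t)² − D/(2a(t)³). -/

import Mathlib

/-- The second modified Friedmann equation `ä/a = Λ/3 - (1/3) C a² - D/(2a³)` follows from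
the pressure-free first modified Friedmann equation and its first integral. -/
theorem friedmann_acceleration_equation
    (I : Set ℝ) (hIopen : IsOpen I) (hIconn : IsPreconnected I)
    (C Λ Rstar D : ℝ) (a a' a'' : ℝ → ℝ)
    (ha' : ∀ t ∈ I, HasDerivAt a (a' t) t)
    (ha'' : ∀ t ∈ I, HasDerivAt a' (a'' t) t)
    (hapos : ∀ t ∈ I, a t > 0)
    (hODE : ∀ t ∈ I, 0 = 2 * deriv (fun s => a' s * Real.sqrt (a s)) t
      + (5/6) * C * (a t) ^ ((7:ℝ)/2) - Λ * (a t) ^ ((3:ℝ)/2)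
      + (Rstar/6) * (a t) ^ (-(1:ℝ)/2))
    (hFI : ∀ t ∈ I, (a' t / a t) ^ 2
      = -(C/6) * (a t) ^ 2 + Λ/3 - Rstar / (6 * (a t) ^ 2) + D / (a t) ^ 3) :
    ∀ t ∈ I, a'' t / a t = Λ/3 - (1/3) * C * (a t) ^ 2 - D / (2 * (a t) ^ 3) := by
  intro t ht
  have hx : 0 < a t := hapos t ht
  set s := Real.sqrt (a t) with hsdef
  have hspos : 0 < s := Real.sqrt_pos.mpr hx
  have hs2 : s ^ 2 = a t := Real.sq_sqrt hx.le
  have hsq : HasDerivAt (fun y => Real.sqrt (a y)) (a' t / (2 * s)) t :=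
    (ha' t ht).sqrt (ne_of_gt hx)
  have hprod : HasDerivAt (fun y => a' y * Real.sqrt (a y))
      (a'' t * s + a' t * (a' t / (2 * s))) t :=
    (ha'' t ht).mul hsq
  have hderiv : deriv (fun y => a' y * Real.sqrt (a y)) t
      = a'' t * s + a' t * (a' t / (2 * s)) := hprod.deriv
  -- rewrite rpow powers
  have h72 : (a t) ^ ((7:ℝ)/2) = (a t) ^ 3 * s := by
    rw [hsdef, Real.sqrt_eq_rpow, show ((7:ℝ)/2) = (3:ℝ) + 1/2 by norm_num,
      Real.rpow_add hx]
    norm_num [Real.rpow_natCast]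
  have h32 : (a t) ^ ((3:ℝ)/2) = (a t) * s := by
    rw [hsdef, Real.sqrt_eq_rpow, show ((3:ℝ)/2) = (1:ℝ) + 1/2 by norm_num,
      Real.rpow_add hx, Real.rpow_one]
  have hm12 : (a t) ^ (-(1:ℝ)/2) = 1 / s := by
    rw [hsdef, Real.sqrt_eq_rpow, show (-(1:ℝ)/2) = -(1/2 : ℝ) by norm_num,
      Real.rpow_neg hx.le]
    norm_num
  have hODE' := hODE t ht
  rw [hderiv, h72, h32, hm12] at hODE'
  have hFI' := hFI t ht
  rw [← hs2] at hODE' hFI' ⊢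
  have hsne : s ≠ 0 := ne_of_gt hspos
  have key1 : 2 * a'' t * s^2 + a' t^2 + (5/6)*C*s^8 - Λ*s^4 + Rstar/6 = 0 := by
    have h : s * (2 * a'' t * s^2 + a' t^2 + (5/6)*C*s^8 - Λ*s^4 + Rstar/6) = 0 := by
      field_simp at hODE' ⊢
      linear_combination (-s) * hODE'
    exact (mul_eq_zero.mp h).resolve_left hsne
  have key2 : a' t^2 * s^2 = -(C/6)*s^10 + (Λ/3)*s^6 - (Rstar/6)*s^2 + D := by
    field_simp at hFI'
    have h : s^8 * (a' t^2 * s^2 - (-(C/6)*s^10 + (Λ/3)*s^6 - (Rstar/6)*s^2 + D)) = 0 := by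
      linear_combination (s^8/18 : ℝ) * hFI'
    have h2 := (mul_eq_zero.mp h).resolve_left (pow_ne_zero 8 hsne)
    linarith [h2]
  have final : a'' t * s^4 = (Λ/3)*s^6 - (C/3)*s^10 - D/2 := by
    linear_combination (s^2/2) * key1 + (-(1:ℝ)/2) * key2
  field_simp
  linear_combination 6 * final
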